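/- Suppose there exists a ∈ (0,∞) with inf_{x∈ℝ} ∫_{x−a}^{x+a} q(t)/r(t) dt > 0, and suppose moreover that q(x) → 0 as x → −∞ or q(x) → 0 as x → +∞. Then for every p ∈ [1,∞] the boundary value problem −r(x)y′(x)+q(x)y(x)=f(x), lim_{|x|→∞} y(x)=0, is not correctly solvable in L_p(ℝ). -/

import Mathlib

open MeasureTheory Filter Set Real
open scoped ENNReal NNReal

noncomputable section

/-- `y` is a solution of the boundary value problem `-r·y' + q·y = f` on `ℝ` with
`y → 0` at `±∞`: `y` is continuous, locally absolutely continuous (encoded through the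
integral identity, i.e. `y` is the integral of its a.e. derivative `(q·y - f)/r`),
and tends to `0` at both infinities. -/
def IsSolution (r q f y : ℝ → ℝ) : Prop :=
  Continuous y ∧
  (∀ a b : ℝ, y b - y a = ∫ t in a..b, (q t * y t - f t) / r t) ∧
  Tendsto y atBot (nhds 0) ∧ Tendsto y atTop (nhds 0)

/-- Correct solvability of the problem `-r·y' + q·y = f`, `y(±∞) = 0`, in `L_p(ℝ)`:
for every `f ∈ L_p(ℝ)` there is a unique solution `y ∈ L_p(ℝ)`, and the solution
satisfies `‖y‖_p ≤ c‖f‖_p` with a constant `c ∈ (0,∞)` independent of `f`. -/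
def CorrectlySolvableLp (r q : ℝ → ℝ) (p : ℝ≥0∞) : Prop :=
  ∃ c : ℝ≥0∞, 0 < c ∧ c < ⊤ ∧
    ∀ f : ℝ → ℝ, MemLp f p volume →
      (∃! y : ℝ → ℝ, IsSolution r q f y ∧ MemLp y p volume) ∧
      ∀ y : ℝ → ℝ, IsSolution r q f y → MemLp y p volume →
        eLpNorm y p volume ≤ c * eLpNorm f p volume

/-- Correct solvability of the problem `-r·y' + q·y = f`, `y(±∞) = 0`, in `C(ℝ)`
(bounded continuous functions with the sup-norm): for every bounded continuous `f`
there is a unique solution `y` (such a solution is automatically bounded and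
continuous), and `sup|y| ≤ c·sup|f|` with a constant `c ∈ (0,∞)` independent of `f`. -/
def CorrectlySolvableC (r q : ℝ → ℝ) : Prop :=
  ∃ c : ℝ, 0 < c ∧
    ∀ f : ℝ → ℝ, Continuous f → (∃ M : ℝ, ∀ x, |f x| ≤ M) →
      (∃! y : ℝ → ℝ, IsSolution r q f y) ∧
      ∀ y : ℝ → ℝ, IsSolution r q f y → ∀ x, |y x| ≤ c * ⨆ t, |f t|

open intervalIntegral

lemma partition_eq {ψ U V : ℝ → ℝ} {a b : ℝ} (hab : a ≤ b)
    (hUmono : MonotoneOn U (Icc a b)) (hVcont : ContinuousOn V (Icc a b))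
    (h : ∀ s t : ℝ, a ≤ s → s ≤ t → t ≤ b → |ψ t - ψ s| ≤ (U t - U s) * (V t - V s)) :
    ψ b = ψ a := by
  rcases eq_or_lt_of_le hab with rfl | hlt
  · rfl
  have hUba : 0 ≤ U b - U a := by
    have := hUmono (left_mem_Icc.2 hab) (right_mem_Icc.2 hab) hab
    linarith
  have H : ∀ ε : ℝ, 0 < ε → |ψ b - ψ a| ≤ ε * (U b - U a) := by
    intro ε hε
    obtain ⟨δ, hδ, hδ'⟩ := (Metric.uniformContinuousOn_iff).1
      (isCompact_Icc.uniformContinuousOn_of_continuous hVcont) ε hε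
    obtain ⟨n, hn⟩ := exists_nat_gt ((b - a) / δ)
    have hn0 : 0 < (n : ℝ) := lt_of_le_of_lt (div_nonneg (by linarith) hδ.le) hn
    have hnne : (n : ℝ) ≠ 0 := hn0.ne'
    set s : ℝ := (b - a) / n with hs
    have hs0 : 0 < s := div_pos (by linarith) hn0
    have hsδ : s < δ := by
      rw [hs, div_lt_iff₀ hn0]
      calc b - a = ((b-a)/δ) * δ := by field_simp
        _ < n * δ := by exact mul_lt_mul_of_pos_right hn hδ
        _ = δ * n := by ring
    set t : ℕ → ℝ := fun i => a + i * s with ht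
    have ht0 : t 0 = a := by simp [ht]
    have htn : t n = b := by
      simp only [ht, hs]; field_simp; ring
    have htmem : ∀ i : ℕ, i ≤ n → t i ∈ Icc a b := by
      intro i hi
      constructor
      · simp only [ht]; nlinarith [mul_nonneg (Nat.cast_nonneg (α := ℝ) i) hs0.le]
      · simp only [ht]
        have : (i:ℝ) * s ≤ n * s := by
          apply mul_le_mul_of_nonneg_right _ hs0.le
          exact_mod_cast hi
        have hb : a + (n:ℝ) * s = b := by rw [hs]; field_simp; ring
        linarith
    have key : ψ b - ψ a = ∑ i ∈ Finset.range n, (ψ (t (i+1)) - ψ (t i)) := by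
      rw [Finset.sum_range_sub (fun i => ψ (t i)), ht0, htn]
    have keyU : U b - U a = ∑ i ∈ Finset.range n, (U (t (i+1)) - U (t i)) := by
      rw [Finset.sum_range_sub (fun i => U (t i)), ht0, htn]
    rw [key]
    calc |∑ i ∈ Finset.range n, (ψ (t (i+1)) - ψ (t i))|
        ≤ ∑ i ∈ Finset.range n, |ψ (t (i+1)) - ψ (t i)| := Finset.abs_sum_le_sum_abs _ _
      _ ≤ ∑ i ∈ Finset.range n, (U (t (i+1)) - U (t i)) * ε := by
          apply Finset.sum_le_sum
          intro i hi
          have hi' : i < n := Finset.mem_range.1 hi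
          have h1 : t i ∈ Icc a b := htmem i hi'.le
          have h2 : t (i+1) ∈ Icc a b := htmem (i+1) hi'
          have hts : t i ≤ t (i+1) := by
            simp only [ht]
            push_cast
            nlinarith
          have hUi : 0 ≤ U (t (i+1)) - U (t i) := by
            have := hUmono h1 h2 hts; linarith
          have hVi : V (t (i+1)) - V (t i) ≤ ε := by
            have hd : dist (V (t (i+1))) (V (t i)) < ε := by
              apply hδ' _ h2 _ h1
              rw [Real.dist_eq]
              have : t (i+1) - t i = s := by simp only [ht]; push_cast; ring
              rw [this, abs_of_pos hs0]; exact hsδ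
            rw [Real.dist_eq] at hd
            calc V (t (i+1)) - V (t i) ≤ |V (t (i+1)) - V (t i)| := le_abs_self _
              _ ≤ ε := hd.le
          calc |ψ (t (i+1)) - ψ (t i)| ≤ (U (t (i+1)) - U (t i)) * (V (t (i+1)) - V (t i)) :=
                h _ _ h1.1 hts h2.2
            _ ≤ (U (t (i+1)) - U (t i)) * ε := mul_le_mul_of_nonneg_left hVi hUi
      _ = (∑ i ∈ Finset.range n, (U (t (i+1)) - U (t i))) * ε := by rw [Finset.sum_mul]
      _ = ε * (U b - U a) := by rw [← keyU]; ring
  have habs : |ψ b - ψ a| ≤ 0 := by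
    by_contra hc
    push_neg at hc
    have h2 := H (|ψ b - ψ a| / (2 * (U b - U a) + 2)) (by positivity)
    have : |ψ b - ψ a| / (2 * (U b - U a) + 2) * (U b - U a) ≤ |ψ b - ψ a| / 2 := by
      rw [div_mul_eq_mul_div, div_le_div_iff₀ (by positivity) (by norm_num)]
      nlinarith
    linarith
  have := abs_nonneg (ψ b - ψ a)
  have : |ψ b - ψ a| = 0 := le_antisymm habs this
  have := abs_eq_zero.1 this
  linarith

section Ident
variable {g Q : ℝ → ℝ}
  (hgint : ∀ u v : ℝ, IntervalIntegrable g volume u v)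
  (hgnn : ∀ t, 0 ≤ g t)
  (hQ : ∀ u v : ℝ, Q v - Q u = ∫ x in u..v, g x)
  (hQcont : Continuous Q)

include hgint hgnn hQ hQcont

lemma Qmono : Monotone Q := by
  intro u v huv
  have h1 : Q v - Q u = ∫ x in u..v, g x := hQ u v
  have h2 : 0 ≤ ∫ x in u..v, g x :=
    intervalIntegral.integral_nonneg huv (fun x _ => hgnn x)
  linarith

lemma gE_intble (u v : ℝ) :
    IntervalIntegrable (fun x => g x * Real.exp (Q x)) volume u v :=
  (hgint u v).mul_continuousOn ((Real.continuous_exp.comp hQcont).continuousOn)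

lemma integral_g_exp {s t : ℝ} (hst : s ≤ t) :
    ∫ x in s..t, g x * Real.exp (Q x) = Real.exp (Q t) - Real.exp (Q s) := by
  have hmono := Qmono hgint hgnn hQ hQcont
  have hE := gE_intble hgint hgnn hQ hQcont
  have key : (fun v => (∫ x in s..v, g x * Real.exp (Q x)) - Real.exp (Q v)) t
      = (fun v => (∫ x in s..v, g x * Real.exp (Q x)) - Real.exp (Q v)) s := by
    apply partition_eq hst (U := fun v => Real.exp (Q v)) (V := Q)
    · exact fun u hu v hv huv => Real.exp_le_exp.2 (hmono huv)
    · exact hQcont.continuousOn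
    · intro v₁ v₂ h1 h12 h2
      have hsub : (∫ x in s..v₂, g x * Real.exp (Q x)) - ∫ x in s..v₁, g x * Real.exp (Q x)
          = ∫ x in v₁..v₂, g x * Real.exp (Q x) :=
        intervalIntegral.integral_interval_sub_left (hE s v₂) (hE s v₁)
      have hΔ : Q v₂ - Q v₁ = ∫ x in v₁..v₂, g x := hQ v₁ v₂
      have hΔnn : 0 ≤ Q v₂ - Q v₁ := sub_nonneg.2 (hmono h12)
      set Δ := Q v₂ - Q v₁ with hΔdef
      -- bounds on the integral I
      have hIlow : Real.exp (Q v₁) * Δ ≤ ∫ x in v₁..v₂, g x * Real.exp (Q x) := by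
        have : ∫ x in v₁..v₂, g x * Real.exp (Q v₁) ≤ ∫ x in v₁..v₂, g x * Real.exp (Q x) := by
          apply intervalIntegral.integral_mono_on h12 ((hgint v₁ v₂).mul_const _) (hE v₁ v₂)
          intro x hx
          exact mul_le_mul_of_nonneg_left (Real.exp_le_exp.2 (hmono hx.1)) (hgnn x)
        rwa [intervalIntegral.integral_mul_const, ← hΔ, mul_comm] at this
      have hIhigh : (∫ x in v₁..v₂, g x * Real.exp (Q x)) ≤ Real.exp (Q v₂) * Δ := by
        have : ∫ x in v₁..v₂, g x * Real.exp (Q x) ≤ ∫ x in v₁..v₂, g x * Real.exp (Q v₂) := by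
          apply intervalIntegral.integral_mono_on h12 (hE v₁ v₂) ((hgint v₁ v₂).mul_const _)
          intro x hx
          exact mul_le_mul_of_nonneg_left (Real.exp_le_exp.2 (hmono hx.2)) (hgnn x)
        rwa [intervalIntegral.integral_mul_const, ← hΔ, mul_comm] at this
      -- bounds on the exponential difference
      have hQ2 : Q v₂ = Q v₁ + Δ := by rw [hΔdef]; ring
      have hexp1 : Real.exp (Q v₁) * Δ ≤ Real.exp (Q v₂) - Real.exp (Q v₁) := by
        rw [hQ2, Real.exp_add]
        have h1 : Δ + 1 ≤ Real.exp Δ := Real.add_one_le_exp Δ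
        nlinarith [Real.exp_pos (Q v₁)]
      have hexp2 : Real.exp (Q v₂) - Real.exp (Q v₁) ≤ Real.exp (Q v₂) * Δ := by
        rw [hQ2, Real.exp_add]
        have h1 : -Δ + 1 ≤ Real.exp (-Δ) := Real.add_one_le_exp (-Δ)
        have h2 : Real.exp (-Δ) * Real.exp Δ = 1 := by
          rw [← Real.exp_add]; simp
        have h3 : (-Δ + 1) * Real.exp Δ ≤ Real.exp (-Δ) * Real.exp Δ :=
          mul_le_mul_of_nonneg_right h1 (Real.exp_pos Δ).le
        rw [h2] at h3
        nlinarith [Real.exp_pos (Q v₁), Real.exp_pos Δ]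
      rw [sub_sub_sub_comm, hsub]
      rw [show (Real.exp (Q v₂) - Real.exp (Q v₁)) * (Q v₂ - Q v₁)
          = (Real.exp (Q v₂) - Real.exp (Q v₁)) * Δ from rfl]
      rw [abs_le]
      constructor <;> nlinarith
  simp only at key
  rw [intervalIntegral.integral_same] at key
  linarith

lemma integral_g_exp_mul {w G : ℝ → ℝ} (hw : Continuous w) (hwnn : ∀ t, 0 ≤ w t)
    (hG : ∀ u v : ℝ, G v - G u = ∫ x in u..v, w x)
    (hGcont : Continuous G)
    {s t : ℝ} (hst : s ≤ t) :
    ∫ x in s..t, g x * Real.exp (Q x) * G x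
      = Real.exp (Q t) * G t - Real.exp (Q s) * G s - ∫ x in s..t, Real.exp (Q x) * w x := by
  have hmono := Qmono hgint hgnn hQ hQcont
  have hGmono : Monotone G := by
    intro u v huv
    have h1 := hG u v
    have h2 : 0 ≤ ∫ x in u..v, w x :=
      intervalIntegral.integral_nonneg huv (fun x _ => hwnn x)
    linarith
  have hE := gE_intble hgint hgnn hQ hQcont
  have hEG : ∀ u v : ℝ, IntervalIntegrable (fun x => g x * Real.exp (Q x) * G x) volume u v :=
    fun u v => (hE u v).mul_continuousOn hGcont.continuousOn
  have hEw : ∀ u v : ℝ, IntervalIntegrable (fun x => Real.exp (Q x) * w x) volume u v :=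
    fun u v => ((Real.continuous_exp.comp hQcont).mul hw).intervalIntegrable u v
  have hwint : ∀ u v : ℝ, IntervalIntegrable w volume u v := fun u v => hw.intervalIntegrable u v
  have key : (fun v => (∫ x in s..v, g x * Real.exp (Q x) * G x)
        - Real.exp (Q v) * G v + ∫ x in s..v, Real.exp (Q x) * w x) t
      = (fun v => (∫ x in s..v, g x * Real.exp (Q x) * G x)
        - Real.exp (Q v) * G v + ∫ x in s..v, Real.exp (Q x) * w x) s := by
    apply partition_eq hst (U := fun v => Real.exp (Q v)) (V := G)
    · exact fun u hu v hv huv => Real.exp_le_exp.2 (hmono huv)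
    · exact hGcont.continuousOn
    · intro v₁ v₂ h1 h12 h2
      have hsubA : (∫ x in s..v₂, g x * Real.exp (Q x) * G x)
          - ∫ x in s..v₁, g x * Real.exp (Q x) * G x
          = ∫ x in v₁..v₂, g x * Real.exp (Q x) * G x :=
        intervalIntegral.integral_interval_sub_left (hEG s v₂) (hEG s v₁)
      have hsubC : (∫ x in s..v₂, Real.exp (Q x) * w x)
          - ∫ x in s..v₁, Real.exp (Q x) * w x
          = ∫ x in v₁..v₂, Real.exp (Q x) * w x :=
        intervalIntegral.integral_interval_sub_left (hEw s v₂) (hEw s v₁)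
      have hgE12 : ∫ x in v₁..v₂, g x * Real.exp (Q x)
          = Real.exp (Q v₂) - Real.exp (Q v₁) :=
        integral_g_exp hgint hgnn hQ hQcont h12
      have hwsum : ∫ x in v₁..v₂, w x = G v₂ - G v₁ := (hG v₁ v₂).symm
      have hEd : 0 ≤ Real.exp (Q v₂) - Real.exp (Q v₁) :=
        sub_nonneg.2 (Real.exp_le_exp.2 (hmono h12))
      have hGd : 0 ≤ G v₂ - G v₁ := sub_nonneg.2 (hGmono h12)
      -- bounds on A
      have hAlow : (Real.exp (Q v₂) - Real.exp (Q v₁)) * G v₁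
          ≤ ∫ x in v₁..v₂, g x * Real.exp (Q x) * G x := by
        have : ∫ x in v₁..v₂, g x * Real.exp (Q x) * G v₁
            ≤ ∫ x in v₁..v₂, g x * Real.exp (Q x) * G x := by
          apply intervalIntegral.integral_mono_on h12 ((hE v₁ v₂).mul_const _) (hEG v₁ v₂)
          intro x hx
          exact mul_le_mul_of_nonneg_left (hGmono hx.1)
            (mul_nonneg (hgnn x) (Real.exp_pos _).le)
        rwa [intervalIntegral.integral_mul_const, hgE12] at this
      have hAhigh : (∫ x in v₁..v₂, g x * Real.exp (Q x) * G x)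
          ≤ (Real.exp (Q v₂) - Real.exp (Q v₁)) * G v₂ := by
        have : ∫ x in v₁..v₂, g x * Real.exp (Q x) * G x
            ≤ ∫ x in v₁..v₂, g x * Real.exp (Q x) * G v₂ := by
          apply intervalIntegral.integral_mono_on h12 (hEG v₁ v₂) ((hE v₁ v₂).mul_const _)
          intro x hx
          exact mul_le_mul_of_nonneg_left (hGmono hx.2)
            (mul_nonneg (hgnn x) (Real.exp_pos _).le)
        rwa [intervalIntegral.integral_mul_const, hgE12] at this
      -- bounds on C
      have hClow : Real.exp (Q v₁) * (G v₂ - G v₁)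
          ≤ ∫ x in v₁..v₂, Real.exp (Q x) * w x := by
        have : ∫ x in v₁..v₂, Real.exp (Q v₁) * w x
            ≤ ∫ x in v₁..v₂, Real.exp (Q x) * w x := by
          apply intervalIntegral.integral_mono_on h12 ((hwint v₁ v₂).const_mul _) (hEw v₁ v₂)
          intro x hx
          exact mul_le_mul_of_nonneg_right (Real.exp_le_exp.2 (hmono hx.1)) (hwnn x)
        rwa [intervalIntegral.integral_const_mul, hwsum] at this
      have hChigh : (∫ x in v₁..v₂, Real.exp (Q x) * w x)
          ≤ Real.exp (Q v₂) * (G v₂ - G v₁) := by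
        have : ∫ x in v₁..v₂, Real.exp (Q x) * w x
            ≤ ∫ x in v₁..v₂, Real.exp (Q v₂) * w x := by
          apply intervalIntegral.integral_mono_on h12 (hEw v₁ v₂) ((hwint v₁ v₂).const_mul _)
          intro x hx
          exact mul_le_mul_of_nonneg_right (Real.exp_le_exp.2 (hmono hx.2)) (hwnn x)
        rwa [intervalIntegral.integral_const_mul, hwsum] at this
      rw [show ((∫ x in s..v₂, g x * Real.exp (Q x) * G x)
            - Real.exp (Q v₂) * G v₂ + ∫ x in s..v₂, Real.exp (Q x) * w x)
          - ((∫ x in s..v₁, g x * Real.exp (Q x) * G x)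
            - Real.exp (Q v₁) * G v₁ + ∫ x in s..v₁, Real.exp (Q x) * w x)
          = ((∫ x in s..v₂, g x * Real.exp (Q x) * G x)
              - ∫ x in s..v₁, g x * Real.exp (Q x) * G x)
            - (Real.exp (Q v₂) * G v₂ - Real.exp (Q v₁) * G v₁)
            + ((∫ x in s..v₂, Real.exp (Q x) * w x)
              - ∫ x in s..v₁, Real.exp (Q x) * w x) from by ring]
      rw [hsubA, hsubC, abs_le]
      constructor <;> nlinarith
  simp only at key
  rw [intervalIntegral.integral_same, intervalIntegral.integral_same] at key
  linarith [key]

end Ident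

set_option maxHeartbeats 1000000 in
lemma key_construction (r q : ℝ → ℝ) (hr : Continuous r) (hrpos : ∀ x, 0 < r x)
    (hq : LocallyIntegrable q volume) (hqnn : ∀ x, 0 ≤ q x)
    (a : ℝ) (ha : 0 < a)
    (hB : 0 < ⨅ c : ℝ, ∫ t in (c - a)..(c + a), q t / r t)
    (ε L α : ℝ) (hε : 0 < ε) (hL : 2*a + 1 ≤ L)
    (hqε : ∀ t ∈ Icc α (α + L), q t ≤ ε) :
    ∃ f y : ℝ → ℝ,
      Continuous f ∧ (∀ t, 0 ≤ f t ∧ f t ≤ 1) ∧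
      (∀ t, ‖f t‖ ≤ ‖((Icc (α-1) (α+L+1)).indicator (fun _ => (1:ℝ))) t‖) ∧
      (∀ p : ℝ≥0∞, MemLp f p volume) ∧
      IsSolution r q f y ∧
      (∀ t, 0 ≤ y t) ∧
      (∀ p : ℝ≥0∞, 1 ≤ p → p ≠ ⊤ → MemLp y p volume) ∧
      (∀ x ∈ Icc α (α + L - 2*a),
        (1 - Real.exp (-(⨅ c : ℝ, ∫ t in (c - a)..(c + a), q t / r t))) / ε ≤ y x) := by
  -- basic objects
  set B : ℝ := ⨅ c : ℝ, ∫ t in (c - a)..(c + a), q t / r t with hBdef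
  have hFnn : ∀ c : ℝ, 0 ≤ ∫ t in (c - a)..(c + a), q t / r t := fun c =>
    intervalIntegral.integral_nonneg (by linarith) (fun x _ => div_nonneg (hqnn x) (hrpos x).le)
  have hBdd : BddBelow (Set.range fun c : ℝ => ∫ t in (c - a)..(c + a), q t / r t) := by
    refine ⟨0, ?_⟩; rintro z ⟨c, rfl⟩; exact hFnn c
  have hBF : ∀ c : ℝ, B ≤ ∫ t in (c - a)..(c + a), q t / r t := fun c => ciInf_le hBdd c
  have hBnn : 0 ≤ B := le_ciInf hFnn
  have hrinv : Continuous fun t => (r t)⁻¹ := hr.inv₀ (fun x => (hrpos x).ne')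
  set g : ℝ → ℝ := fun t => q t / r t with hgdef
  have hgnn : ∀ t, 0 ≤ g t := fun t => div_nonneg (hqnn t) (hrpos t).le
  have hgint : ∀ u v : ℝ, IntervalIntegrable g volume u v := by
    intro u v
    have hqi : IntervalIntegrable q volume u v :=
      (hq.integrableOn_isCompact isCompact_uIcc).intervalIntegrable
    have := hqi.mul_continuousOn hrinv.continuousOn
    simpa [hgdef, div_eq_mul_inv] using this
  set Q : ℝ → ℝ := fun x => ∫ t in (0:ℝ)..x, g t with hQdef
  have hQ : ∀ u v : ℝ, Q v - Q u = ∫ x in u..v, g x := fun u v =>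
    intervalIntegral.integral_interval_sub_left (hgint 0 v) (hgint 0 u)
  have hQcont : Continuous Q := intervalIntegral.continuous_primitive hgint 0
  have hQmono : Monotone Q := by
    intro u v huv
    have h2 : 0 ≤ ∫ x in u..v, g x :=
      intervalIntegral.integral_nonneg huv (fun x _ => hgnn x)
    have := hQ u v; linarith
  have hwin : ∀ x : ℝ, B ≤ Q (x + 2*a) - Q x := by
    intro x
    have h1 := hBF (x + a)
    have h2 : Q (x + 2*a) - Q x = ∫ t in (x + a - a)..(x + a + a), g t := by
      rw [hQ x (x + 2*a)]
      congr 1 <;> ring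
    rw [h2]; exact h1
  have hQlow : ∀ (n : ℕ) (x : ℝ), Q (x - 2*a*n) + n * B ≤ Q x := by
    intro n
    induction n with
    | zero => intro x; simp
    | succ n ih =>
      intro x
      have h1 := ih (x - 2*a)
      have h2 := hwin (x - 2*a)
      have h4 : x - 2*a + 2*a = x := by ring
      rw [h4] at h2
      push_cast
      have h3 : x - 2*a*((n:ℝ)+1) = x - 2*a - 2*a*(n:ℝ) := by ring
      rw [h3]
      linarith
  -- the test function f
  set β : ℝ := α + L with hβdef
  set f : ℝ → ℝ := fun t => max 0 (min 1 (min (t - (α-1)) ((β+1) - t))) with hfdef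
  have hfcont : Continuous f :=
    continuous_const.max (continuous_const.min
      ((continuous_id.sub continuous_const).min (continuous_const.sub continuous_id)))
  have hf0 : ∀ t, 0 ≤ f t := fun t => le_max_left _ _
  have hf1 : ∀ t, f t ≤ 1 := fun t =>
    max_le zero_le_one (min_le_left _ _)
  have hfone : ∀ t ∈ Icc α β, f t = 1 := by
    intro t ht
    have h1 : (1:ℝ) ≤ t - (α-1) := by have := ht.1; linarith
    have h2 : (1:ℝ) ≤ (β+1) - t := by have := ht.2; linarith
    simp only [hfdef]
    rw [min_eq_left (le_min h1 h2), max_eq_right zero_le_one]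
  have hfzero : ∀ t : ℝ, (t ≤ α - 1 ∨ β + 1 ≤ t) → f t = 0 := by
    intro t ht
    have : min (t - (α-1)) ((β+1) - t) ≤ 0 := by
      rcases ht with h | h
      · exact le_trans (min_le_left _ _) (by linarith)
      · exact le_trans (min_le_right _ _) (by linarith)
    simp only [hfdef]
    rw [max_eq_left]
    exact le_trans (min_le_right _ _) this
  have hfbnd : ∀ t, ‖f t‖ ≤ ‖((Icc (α-1) (β+1)).indicator (fun _ => (1:ℝ))) t‖ := by
    intro t
    by_cases ht : t ∈ Icc (α-1) (β+1)
    · rw [Set.indicator_of_mem ht]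
      simp only [Real.norm_eq_abs, abs_of_nonneg (hf0 t), abs_one]
      exact hf1 t
    · rw [Set.indicator_of_notMem ht]
      have : f t = 0 := by
        apply hfzero
        rw [mem_Icc, not_and_or] at ht
        rcases ht with h | h
        · left; linarith [not_le.1 h]
        · right; linarith [not_le.1 h]
      simp [this]
  have hfmem : ∀ p : ℝ≥0∞, MemLp f p volume := by
    intro p
    have hind : MemLp ((Icc (α-1) (β+1)).indicator fun _ => (1:ℝ)) p volume :=
      memLp_indicator_const p measurableSet_Icc 1 (Or.inr measure_Icc_lt_top.ne)
    exact hind.of_le hfcont.aestronglyMeasurable (ae_of_all _ hfbnd)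
  -- the solution y
  set w : ℝ → ℝ := fun t => Real.exp (-Q t) * (f t / r t) with hwdef
  have hwcont : Continuous w :=
    (Real.continuous_exp.comp hQcont.neg).mul (hfcont.div hr (fun x => (hrpos x).ne'))
  have hwnn : ∀ t, 0 ≤ w t := fun t =>
    mul_nonneg (Real.exp_pos _).le (div_nonneg (hf0 t) (hrpos t).le)
  have hwint : ∀ u v : ℝ, IntervalIntegrable w volume u v := fun u v =>
    hwcont.intervalIntegrable u v
  set G : ℝ → ℝ := fun x => ∫ t in (α-1)..x, w t with hGdef
  have hG : ∀ u v : ℝ, G v - G u = ∫ x in u..v, w x := fun u v =>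
    intervalIntegral.integral_interval_sub_left (hwint _ v) (hwint _ u)
  have hGcont : Continuous G := intervalIntegral.continuous_primitive hwint _
  have hGmono : Monotone G := by
    intro u v huv
    have h2 : 0 ≤ ∫ x in u..v, w x :=
      intervalIntegral.integral_nonneg huv (fun x _ => hwnn x)
    have := hG u v; linarith
  set K : ℝ := G (β+1) with hKdef
  have hwzero : ∀ t : ℝ, (t ≤ α - 1 ∨ β + 1 ≤ t) → w t = 0 := by
    intro t ht; simp only [hwdef]; rw [hfzero t ht]; simp
  have hGK : ∀ x : ℝ, β + 1 ≤ x → G x = K := by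
    intro x hx
    have h1 : G x - K = ∫ t in (β+1)..x, w t := hG (β+1) x
    have h2 : ∫ t in (β+1)..x, w t = 0 := by
      rw [intervalIntegral.integral_congr (g := fun _ => (0:ℝ))]
      · simp
      · intro t ht
        rw [uIcc_of_le hx] at ht
        exact hwzero t (Or.inr ht.1)
    rw [h2] at h1; linarith
  have hG0 : ∀ x : ℝ, x ≤ α - 1 → G x = 0 := by
    intro x hx
    have h1 : G (α-1) - G x = ∫ t in x..(α-1), w t := hG x (α-1)
    have hGa : G (α-1) = 0 := by simp [hGdef]
    have h2 : ∫ t in x..(α-1), w t = 0 := by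
      rw [intervalIntegral.integral_congr (g := fun _ => (0:ℝ))]
      · simp
      · intro t ht
        rw [uIcc_of_le hx] at ht
        exact hwzero t (Or.inl ht.2)
    rw [hGa, h2] at h1; linarith
  have hGnn : ∀ x, 0 ≤ G x := by
    intro x
    rcases le_total x (α-1) with h | h
    · rw [hG0 x h]
    · have h0 : G (α-1) = 0 := hG0 _ le_rfl
      have h1 : G (α-1) ≤ G x := hGmono h
      linarith
  have hGleK : ∀ x, G x ≤ K := by
    intro x
    rcases le_total x (β+1) with h | h
    · exact hGmono h
    · rw [hGK x h]
  set y : ℝ → ℝ := fun x => Real.exp (Q x) * (K - G x) with hydef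
  have hycont : Continuous y :=
    (Real.continuous_exp.comp hQcont).mul (continuous_const.sub hGcont)
  have hynn : ∀ t, 0 ≤ y t := fun t =>
    mul_nonneg (Real.exp_pos _).le (sub_nonneg.2 (hGleK t))
  have hBpos : 0 < B := hB
  have hKnn : 0 ≤ K := hGnn (β+1)
  -- integrability helpers
  have hgE_int : ∀ u v : ℝ, IntervalIntegrable (fun x => g x * Real.exp (Q x)) volume u v :=
    fun u v => (hgint u v).mul_continuousOn (Real.continuous_exp.comp hQcont).continuousOn
  have hgEG_int : ∀ u v : ℝ, IntervalIntegrable (fun x => g x * Real.exp (Q x) * G x) volume u v :=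
    fun u v => (hgE_int u v).mul_continuousOn hGcont.continuousOn
  have hEw_int : ∀ u v : ℝ, IntervalIntegrable (fun x => Real.exp (Q x) * w x) volume u v :=
    fun u v => ((Real.continuous_exp.comp hQcont).mul hwcont).intervalIntegrable u v
  -- the integral identity
  have hident : ∀ u v : ℝ, u ≤ v → y v - y u = ∫ t in u..v, (q t * y t - f t) / r t := by
    intro u v huv
    have e1 : ∫ x in u..v, g x * Real.exp (Q x) = Real.exp (Q v) - Real.exp (Q u) :=
      integral_g_exp hgint hgnn hQ hQcont huv
    have e2 := integral_g_exp_mul hgint hgnn hQ hQcont hwcont hwnn hG hGcont huv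
    have hptw : ∀ t : ℝ, (q t * y t - f t) / r t
        = K * (g t * Real.exp (Q t)) - g t * Real.exp (Q t) * G t - Real.exp (Q t) * w t := by
      intro t
      have hrne : r t ≠ 0 := (hrpos t).ne'
      have hy' : y t = Real.exp (Q t) * (K - G t) := rfl
      have hw' : w t = Real.exp (-Q t) * (f t / r t) := rfl
      have hg' : g t = q t / r t := rfl
      have he : Real.exp (Q t) ≠ 0 := Real.exp_ne_zero _
      rw [hy', hw', hg', Real.exp_neg]
      field_simp
    rw [intervalIntegral.integral_congr (g := fun t =>
        K * (g t * Real.exp (Q t)) - g t * Real.exp (Q t) * G t - Real.exp (Q t) * w t)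
        (fun t _ => hptw t)]
    rw [intervalIntegral.integral_sub
        (((hgE_int u v).const_mul K).sub (hgEG_int u v)) (hEw_int u v)]
    rw [intervalIntegral.integral_sub ((hgE_int u v).const_mul K) (hgEG_int u v)]
    rw [intervalIntegral.integral_const_mul, e1, e2]
    have hyu : y u = Real.exp (Q u) * (K - G u) := rfl
    have hyv : y v = Real.exp (Q v) * (K - G v) := rfl
    rw [hyu, hyv]
    ring
  have hidentity : ∀ u v : ℝ, y v - y u = ∫ t in u..v, (q t * y t - f t) / r t := by
    intro u v
    rcases le_total u v with h | h
    · exact hident u v h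
    · have h1 := hident v u h
      rw [intervalIntegral.integral_symm v u]
      linarith
  -- limits
  have hQbot : Tendsto Q atBot atBot := by
    rw [tendsto_atBot]
    intro b
    obtain ⟨n, hn⟩ := exists_nat_ge ((Q 0 - b) / B)
    refine eventually_atBot.2 ⟨0 - 2*a*n, fun x hx => ?_⟩
    have h1 := hQlow n 0
    have h2 := hQmono hx
    have h3 : Q 0 - b ≤ n * B := by
      rw [div_le_iff₀ hBpos] at hn; linarith
    linarith
  have hybot : Tendsto y atBot (nhds 0) := by
    have h1 : Tendsto (fun x => Real.exp (Q x) * K) atBot (nhds (0 * K)) :=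
      (Real.tendsto_exp_atBot.comp hQbot).mul_const K
    rw [zero_mul] at h1
    refine Tendsto.congr' ?_ h1
    filter_upwards [eventually_le_atBot (α-1)] with x hx
    show Real.exp (Q x) * K = Real.exp (Q x) * (K - G x)
    rw [hG0 x hx, sub_zero]
  have hytop : Tendsto y atTop (nhds 0) := by
    refine Tendsto.congr' ?_ (tendsto_const_nhds (x := (0:ℝ)))
    filter_upwards [eventually_ge_atTop (β+1)] with x hx
    show (0:ℝ) = Real.exp (Q x) * (K - G x)
    rw [hGK x hx, sub_self, mul_zero]
  have hsol : IsSolution r q f y := ⟨hycont, fun u v => hidentity u v, hybot, hytop⟩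
  -- decay estimate and integrability of y
  have hdecay : ∀ x : ℝ, x ≤ α - 1 →
      y x ≤ (K * Real.exp (Q (α-1) + B)) * Real.exp (B/(2*a) * (x - (α-1))) := by
    intro x hx
    set n : ℕ := ⌊(α - 1 - x) / (2*a)⌋₊ with hndef
    have h2apos : (0:ℝ) < 2*a := by linarith
    have hquot : 0 ≤ (α - 1 - x) / (2*a) := div_nonneg (by linarith) h2apos.le
    have h2an : 2*a*n ≤ α - 1 - x := by
      have h := Nat.floor_le hquot
      calc 2*a*(n:ℝ) ≤ 2*a*((α-1-x)/(2*a)) := mul_le_mul_of_nonneg_left h h2apos.le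
        _ = α-1-x := by field_simp
    have hnlow : (α - 1 - x)/(2*a) - 1 < (n:ℝ) := Nat.sub_one_lt_floor _
    have hq1 : Q x ≤ Q (α - 1 - 2*a*n) := hQmono (by linarith)
    have hq2 : Q (α-1-2*a*n) + n*B ≤ Q (α-1) := hQlow n (α-1)
    have hq3 : Q x ≤ Q (α-1) + B - B/(2*a)*(α-1-x) := by
      have hmul : ((α-1-x)/(2*a) - 1) * B ≤ (n:ℝ)*B :=
        mul_le_mul_of_nonneg_right hnlow.le hBnn
      have hrw : B/(2*a)*(α-1-x) = ((α-1-x)/(2*a))*B := by ring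
      rw [hrw]
      linarith
    have hyx : y x ≤ Real.exp (Q x) * K := by
      show Real.exp (Q x) * (K - G x) ≤ Real.exp (Q x) * K
      exact mul_le_mul_of_nonneg_left (by linarith [hGnn x]) (Real.exp_pos _).le
    have hrw2 : (K * Real.exp (Q (α-1) + B)) * Real.exp (B/(2*a) * (x - (α-1)))
        = K * Real.exp ((Q (α-1) + B) + B/(2*a) * (x - (α-1))) := by
      rw [mul_assoc, ← Real.exp_add]
    rw [hrw2]
    calc y x ≤ Real.exp (Q x) * K := hyx
      _ = K * Real.exp (Q x) := by ring
      _ ≤ K * Real.exp ((Q (α-1) + B) + B/(2*a) * (x - (α-1))) := by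
          apply mul_le_mul_of_nonneg_left _ hKnn
          apply Real.exp_le_exp.2
          have : B/(2*a) * (x - (α-1)) = -(B/(2*a)*(α-1-x)) := by ring
          rw [this]
          linarith
  obtain ⟨M0, hM0⟩ := (isCompact_Icc (a := α-1) (b := β+1)).exists_bound_of_continuousOn
    hycont.continuousOn
  have hαβ : α - 1 ≤ β + 1 := by simp only [hβdef]; nlinarith
  have hM0nn : 0 ≤ M0 := le_trans (norm_nonneg _) (hM0 (α-1) ⟨le_rfl, hαβ⟩)
  set D : ℝ := K * Real.exp (Q (α-1) + B) with hDdef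
  have hDnn : 0 ≤ D := mul_nonneg hKnn (Real.exp_pos _).le
  set D' : ℝ := max D M0 with hD'def
  have hD'nn : 0 ≤ D' := le_trans hM0nn (le_max_right _ _)
  set lam : ℝ := B/(2*a) with hlamdef
  have hlampos : 0 < lam := div_pos hBpos (by linarith)
  set gbnd : ℝ → ℝ := (Iic (β+1)).indicator (fun x => D' * Real.exp (lam * (x - (α-1)))) with hgbnddef
  have hyzero : ∀ x : ℝ, β + 1 ≤ x → y x = 0 := by
    intro x hx
    show Real.exp (Q x) * (K - G x) = 0
    rw [hGK x hx, sub_self, mul_zero]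
  have hdom : ∀ x, ‖y x‖ ≤ gbnd x := by
    intro x
    rcases le_or_gt x (β+1) with hx | hx
    · have hgx : gbnd x = D' * Real.exp (lam * (x - (α-1))) :=
        Set.indicator_of_mem (mem_Iic.2 hx) _
      rw [hgx, Real.norm_eq_abs, abs_of_nonneg (hynn x)]
      rcases le_or_gt x (α-1) with hx2 | hx2
      · calc y x ≤ D * Real.exp (lam * (x - (α-1))) := hdecay x hx2
          _ ≤ D' * Real.exp (lam * (x - (α-1))) :=
            mul_le_mul_of_nonneg_right (le_max_left _ _) (Real.exp_pos _).le
      · have h1 : ‖y x‖ ≤ M0 := hM0 x ⟨hx2.le, hx⟩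
        rw [Real.norm_eq_abs, abs_of_nonneg (hynn x)] at h1
        calc y x ≤ M0 := h1
          _ ≤ D' := le_max_right _ _
          _ ≤ D' * Real.exp (lam * (x - (α-1))) := by
              apply le_mul_of_one_le_right hD'nn
              rw [Real.one_le_exp_iff]
              have : 0 ≤ x - (α-1) := by linarith
              positivity
    · have hgx : gbnd x = 0 := Set.indicator_of_notMem (by simp [mem_Iic]; linarith) _
      rw [hgx, hyzero x hx.le]
      simp
  have hbase : IntegrableOn (fun x => Real.exp (lam * x)) (Iic (β+1)) volume := by
    have h1 : IntegrableOn (fun x => Real.exp (-lam * x)) (Ioi (-(β+1))) volume := by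
      have := exp_neg_integrableOn_Ioi (-(β+1)) hlampos
      simpa [neg_mul] using this
    have h2 : Integrable ((Ioi (-(β+1))).indicator (fun x => Real.exp (-lam * x))) volume :=
      (integrable_indicator_iff measurableSet_Ioi).2 h1
    have h3 : Integrable (fun x : ℝ =>
        ((Ioi (-(β+1))).indicator (fun z => Real.exp (-lam * z))) ((-1) * x)) volume :=
      h2.comp_mul_left' (by norm_num)
    have h4 : (fun x : ℝ => ((Ioi (-(β+1))).indicator (fun z => Real.exp (-lam * z))) ((-1) * x))
        = (Iio (β+1)).indicator (fun x => Real.exp (lam * x)) := by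
      funext x
      by_cases hx : x < β + 1
      · rw [Set.indicator_of_mem (by simp [mem_Ioi]; linarith : (-1)*x ∈ Ioi (-(β+1))),
          Set.indicator_of_mem (mem_Iio.2 hx)]
        congr 1
        ring
      · rw [Set.indicator_of_notMem (by simp [mem_Ioi]; linarith),
          Set.indicator_of_notMem (by simp [mem_Iio]; linarith)]
    rw [h4] at h3
    have h5 : IntegrableOn (fun x => Real.exp (lam * x)) (Iio (β+1)) volume :=
      (integrable_indicator_iff measurableSet_Iio).1 h3
    exact (integrableOn_Iic_iff_integrableOn_Iio (by simp)).2 h5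
  have hgbnd_int : Integrable gbnd volume := by
    rw [hgbnddef, integrable_indicator_iff measurableSet_Iic]
    have h6 : (fun x => D' * Real.exp (lam * (x - (α-1))))
        = fun x => (D' * Real.exp (-(lam * (α-1)))) * Real.exp (lam * x) := by
      funext x
      rw [mul_assoc, ← Real.exp_add]
      congr 2
      ring
    rw [h6]
    exact (hbase.const_mul _)
  have hyint : Integrable y volume :=
    hgbnd_int.mono' hycont.aestronglyMeasurable (ae_of_all _ hdom)
  have hybdd : ∀ x, ‖y x‖ ≤ D' := by
    intro x
    rcases le_or_gt x (β+1) with hx | hx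
    · rw [Real.norm_eq_abs, abs_of_nonneg (hynn x)]
      rcases le_or_gt x (α-1) with hx2 | hx2
      · calc y x ≤ D * Real.exp (lam * (x - (α-1))) := hdecay x hx2
          _ ≤ D * 1 := by
              apply mul_le_mul_of_nonneg_left _ hDnn
              rw [Real.exp_le_one_iff]
              have h0 : x - (α-1) ≤ 0 := by linarith
              exact mul_nonpos_of_nonneg_of_nonpos hlampos.le h0
          _ = D := mul_one D
          _ ≤ D' := le_max_left _ _
      · have h1 : ‖y x‖ ≤ M0 := hM0 x ⟨hx2.le, hx⟩
        rw [Real.norm_eq_abs, abs_of_nonneg (hynn x)] at h1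
        exact h1.trans (le_max_right _ _)
    · rw [hyzero x hx.le]
      simpa using hD'nn
  have hymem : ∀ p : ℝ≥0∞, 1 ≤ p → p ≠ ⊤ → MemLp y p volume := by
    intro p hp1 hpt
    have hp0 : p ≠ 0 := by
      intro h; rw [h] at hp1; simp at hp1
    have hpt1 : 1 ≤ p.toReal := by
      rw [← ENNReal.toReal_one]
      exact ENNReal.toReal_mono hpt hp1
    set pt : ℝ := p.toReal with hptdef
    set Mb : ℝ := max D' 1 with hMbdef
    have hMb1 : 1 ≤ Mb := le_max_right _ _
    have hMbnn : 0 ≤ Mb := by linarith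
    have hyMb : ∀ x, ‖y x‖ ≤ Mb := fun x => (hybdd x).trans (le_max_left _ _)
    have hInt : Integrable (fun x => ‖y x‖ ^ pt) volume := by
      apply Integrable.mono' ((hyint.norm).const_mul (Mb ^ (pt - 1)))
      · exact (hycont.norm.rpow_const (fun x => Or.inr (by linarith))).aestronglyMeasurable
      · refine ae_of_all _ fun x => ?_
        rw [Real.norm_eq_abs, abs_of_nonneg (Real.rpow_nonneg (norm_nonneg _) _)]
        rcases eq_or_lt_of_le (norm_nonneg (y x)) with h0 | h0
        · rw [← h0, Real.zero_rpow (by linarith : pt ≠ 0)]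
          positivity
        · calc ‖y x‖ ^ pt = ‖y x‖ ^ (pt - 1) * ‖y x‖ := by
                rw [← Real.rpow_add_one h0.ne' (pt - 1)]
                congr 1
                ring
            _ ≤ Mb ^ (pt - 1) * ‖y x‖ := by
                apply mul_le_mul_of_nonneg_right _ (norm_nonneg _)
                exact Real.rpow_le_rpow (norm_nonneg _) (hyMb x) (by linarith)
    have h7 : MemLp (fun x => ‖y x‖ ^ pt) (p / p) volume := by
      rw [ENNReal.div_self hp0 hpt]
      exact memLp_one_iff_integrable.2 hInt
    exact (memLp_norm_rpow_iff hycont.aestronglyMeasurable hp0 hpt).1 h7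
  -- the lower bound
  have hlow : ∀ x ∈ Icc α (α + L - 2*a), (1 - Real.exp (-B))/ε ≤ y x := by
    intro x hx
    set R : ℝ → ℝ := fun s => ∫ t in α..s, (r t)⁻¹ with hRdef
    have hRint : ∀ u v : ℝ, IntervalIntegrable (fun t => (r t)⁻¹) volume u v :=
      fun u v => hrinv.intervalIntegrable u v
    have hR : ∀ u v : ℝ, R v - R u = ∫ t in u..v, (r t)⁻¹ := fun u v =>
      intervalIntegral.integral_interval_sub_left (hRint _ _) (hRint _ _)
    have hRcont : Continuous R := intervalIntegral.continuous_primitive hRint α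
    have hintcont : Continuous (fun t => Real.exp (-(ε * (R t - R x))) * (r t)⁻¹) :=
      (Real.continuous_exp.comp
        ((continuous_const.mul (hRcont.sub continuous_const)).neg)).mul hrinv
    have hcmp : ∀ u v : ℝ, α ≤ u → u ≤ v → v ≤ β → Q v - Q u ≤ ε * (R v - R u) := by
      intro u v hu huv hv
      have hrhs : ε * (R v - R u) = ∫ t in u..v, ε * (r t)⁻¹ := by
        rw [hR u v, intervalIntegral.integral_const_mul]
      rw [hrhs, hQ u v]
      apply intervalIntegral.integral_mono_on huv (hgint u v) ((hRint u v).const_mul ε)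
      intro t ht
      have hg' : g t = q t / r t := rfl
      rw [hg', div_eq_mul_inv]
      apply mul_le_mul_of_nonneg_right _ (inv_nonneg.2 (hrpos t).le)
      apply hqε
      constructor
      · linarith [ht.1]
      · have := ht.2
        simp only [hβdef] at hv
        linarith
    have hxα : α ≤ x := hx.1
    have hx2aβ : x + 2*a ≤ β := by
      have := hx.2
      simp only [hβdef]
      linarith
    have hxβ : x ≤ β := by linarith
    have hEwx_int : ∀ u v : ℝ, IntervalIntegrable (fun t => Real.exp (Q x) * w t) volume u v :=
      fun u v => (continuous_const.mul hwcont).intervalIntegrable u v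
    have h1 : K - G x = ∫ t in x..(β+1), w t := by
      have := hG x (β+1)
      have hK' : K = G (β+1) := rfl
      linarith
    have h2 : y x = ∫ t in x..(β+1), Real.exp (Q x) * w t := by
      show Real.exp (Q x) * (K - G x) = _
      rw [h1, intervalIntegral.integral_const_mul]
    have h3 : (∫ t in x..β, Real.exp (Q x) * w t) ≤ ∫ t in x..(β+1), Real.exp (Q x) * w t := by
      have hsplit : (∫ t in x..β, Real.exp (Q x) * w t) + ∫ t in β..(β+1), Real.exp (Q x) * w t
          = ∫ t in x..(β+1), Real.exp (Q x) * w t :=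
        intervalIntegral.integral_add_adjacent_intervals (hEwx_int x β) (hEwx_int β (β+1))
      have hpos2 : 0 ≤ ∫ t in β..(β+1), Real.exp (Q x) * w t :=
        intervalIntegral.integral_nonneg (by linarith)
          (fun t _ => mul_nonneg (Real.exp_pos _).le (hwnn t))
      linarith
    have h4 : (∫ t in x..β, Real.exp (-(ε * (R t - R x))) * (r t)⁻¹)
        ≤ ∫ t in x..β, Real.exp (Q x) * w t := by
      apply intervalIntegral.integral_mono_on hxβ
        (hintcont.intervalIntegrable x β)
        (hEwx_int x β)
      intro t ht
      have htα : α ≤ t := le_trans hxα ht.1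
      have htβ : t ≤ β := ht.2
      have hf1t : f t = 1 := hfone t ⟨htα, htβ⟩
      have hw' : w t = Real.exp (-Q t) * (f t / r t) := rfl
      have hQle : Q t - Q x ≤ ε * (R t - R x) := hcmp x t hxα ht.1 htβ
      rw [hw', hf1t]
      have hrw : Real.exp (Q x) * (Real.exp (-Q t) * ((1:ℝ) / r t))
          = Real.exp (Q x - Q t) * (r t)⁻¹ := by
        rw [Real.exp_sub, Real.exp_neg, one_div]
        field_simp
      rw [hrw]
      apply mul_le_mul_of_nonneg_right _ (inv_nonneg.2 (hrpos t).le)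
      exact Real.exp_le_exp.2 (by show -(ε * (R t - R x)) ≤ Q x - Q t; linarith)
    have h5 : (∫ t in x..β, Real.exp (-(ε * (R t - R x))) * (r t)⁻¹)
        = (1/ε) * (1 - Real.exp (-(ε * (R β - R x)))) := by
      have hderiv : ∀ t ∈ uIcc x β, HasDerivAt
          (fun s => -(1/ε) * Real.exp (-(ε * (R s - R x))))
          (Real.exp (-(ε * (R t - R x))) * (r t)⁻¹) t := by
        intro t _
        have hRd : HasDerivAt R ((r t)⁻¹) t := by
          apply intervalIntegral.integral_hasDerivAt_right (hRint α t)
            (hrinv.stronglyMeasurableAtFilter volume _) hrinv.continuousAt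
        have hu : HasDerivAt (fun s => -(ε * (R s - R x))) (-(ε * (r t)⁻¹)) t :=
          ((hRd.sub_const (R x)).const_mul ε).neg
        have h2' := hu.exp.const_mul (-(1/ε))
        have heq : Real.exp (-(ε * (R t - R x))) * (r t)⁻¹
            = -(1/ε) * (Real.exp (-(ε * (R t - R x))) * -(ε * (r t)⁻¹)) := by
          field_simp
        rw [heq]
        exact h2'
      rw [intervalIntegral.integral_eq_sub_of_hasDerivAt hderiv
        (hintcont.intervalIntegrable x β)]
      rw [sub_self (R x), mul_zero, neg_zero, Real.exp_zero, mul_one]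
      ring
    have h6 : B ≤ ε * (R β - R x) := by
      have ha1 : B ≤ Q (x + 2*a) - Q x := hwin x
      have ha2 : Q (x + 2*a) - Q x ≤ ε * (R (x + 2*a) - R x) :=
        hcmp x (x + 2*a) hxα (by linarith) hx2aβ
      have ha3 : 0 ≤ R β - R (x + 2*a) := by
        have := hR (x + 2*a) β
        have hnn : 0 ≤ ∫ t in (x + 2*a)..β, (r t)⁻¹ :=
          intervalIntegral.integral_nonneg hx2aβ (fun t _ => (inv_nonneg.2 (hrpos t).le))
        linarith
      nlinarith
    have h7 : (1 - Real.exp (-B))/ε ≤ (1/ε) * (1 - Real.exp (-(ε * (R β - R x)))) := by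
      rw [div_eq_mul_inv, mul_comm, ← one_div]
      apply mul_le_mul_of_nonneg_left _ (by positivity)
      have : Real.exp (-(ε * (R β - R x))) ≤ Real.exp (-B) :=
        Real.exp_le_exp.2 (by linarith)
      linarith
    linarith [h2, h3, h4, h5.symm.le, h7]
  exact ⟨f, y, hfcont, fun t => ⟨hf0 t, hf1 t⟩, hfbnd, hfmem, hsol, hynn, hymem, hlow⟩

theorem stmt15 (r q : ℝ → ℝ) (hr : Continuous r) (hrpos : ∀ x, 0 < r x)
    (hq : LocallyIntegrable q volume) (hqnn : ∀ x, 0 ≤ q x)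
    (a : ℝ) (ha : 0 < a) (hB : 0 < ⨅ x : ℝ, ∫ t in (x - a)..(x + a), q t / r t)
    (hq0 : Tendsto q atBot (nhds 0) ∨ Tendsto q atTop (nhds 0)) :
    ∀ p : ℝ≥0∞, 1 ≤ p →
      (p ≠ ⊤ → ¬ CorrectlySolvableLp r q p) ∧
      (p = ⊤ → ¬ CorrectlySolvableC r q) := by
  have hfind : ∀ ε : ℝ, 0 < ε → ∃ α : ℝ, ∀ t ∈ Icc α (α + (2*a+1)), q t ≤ ε := by
    intro ε hε
    rcases hq0 with h | h
    · obtain ⟨M, hM⟩ := eventually_atBot.1 (h.eventually_le_const hε)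
      exact ⟨M - (2*a+1), fun t ht => hM t (by have := ht.2; linarith)⟩
    · obtain ⟨M, hM⟩ := eventually_atTop.1 (h.eventually_le_const hε)
      exact ⟨M, fun t ht => hM t ht.1⟩
  set B : ℝ := ⨅ x : ℝ, ∫ t in (x - a)..(x + a), q t / r t with hBdef
  set κ : ℝ := 1 - Real.exp (-B) with hκdef
  have hκpos : 0 < κ := by
    have h1 : Real.exp (-B) < 1 := Real.exp_lt_one_iff.2 (by linarith)
    simp only [hκdef]; linarith
  intro p hp
  constructor
  · -- Lp case
    intro hpt hCS
    obtain ⟨c, hc0, hctop, hmain⟩ := hCS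
    have hp0 : p ≠ 0 := by intro h; rw [h] at hp; simp at hp
    have hptR : 1 ≤ p.toReal := by
      rw [← ENNReal.toReal_one]; exact ENNReal.toReal_mono hpt hp
    set T : ℝ≥0∞ := c * ENNReal.ofReal (2*a+3) with hTdef
    have hTtop : T ≠ ⊤ := ENNReal.mul_ne_top hctop.ne ENNReal.ofReal_ne_top
    set ε : ℝ := κ / (T.toReal + 1) with hεdef
    have hεpos : 0 < ε := div_pos hκpos (by positivity)
    obtain ⟨α, hα⟩ := hfind ε hεpos
    obtain ⟨f, y, hfcont, hf01, hfbnd, hfmem, hsol, hynn, hymem, hlow⟩ :=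
      key_construction r q hr hrpos hq hqnn a ha hB ε (2*a+1) α hεpos le_rfl hα
    have hest := (hmain f (hfmem p)).2 y hsol (hymem p hp hpt)
    -- lower bound for eLpNorm y
    have hylow : ∀ x ∈ Icc α (α+1), κ/ε ≤ y x := by
      intro x hx
      have : α + (2*a+1) - 2*a = α + 1 := by ring
      exact hlow x (by rw [this]; exact hx)
    have hlo : ENNReal.ofReal (κ/ε) ≤ eLpNorm y p volume := by
      have hmono : ∀ x, ‖((Icc α (α+1)).indicator (fun _ => κ/ε)) x‖ ≤ ‖y x‖ := by
        intro x
        by_cases hx : x ∈ Icc α (α+1)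
        · rw [Set.indicator_of_mem hx, Real.norm_eq_abs, Real.norm_eq_abs,
            abs_of_nonneg (div_nonneg hκpos.le hεpos.le), abs_of_nonneg (hynn x)]
          exact hylow x hx
        · rw [Set.indicator_of_notMem hx]; simp
      have h1 := eLpNorm_mono (p := p) (μ := volume) hmono
      have h2 : eLpNorm ((Icc α (α+1)).indicator (fun _ => κ/ε)) p volume
          = ENNReal.ofReal (κ/ε) := by
        rw [eLpNorm_indicator_const measurableSet_Icc hp0 hpt]
        rw [Real.volume_Icc]
        have : α + 1 - α = (1:ℝ) := by ring
        rw [this, ENNReal.ofReal_one, ENNReal.one_rpow, mul_one]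
        rw [Real.enorm_eq_ofReal (div_nonneg hκpos.le hεpos.le)]
      rw [← h2]; exact h1
    -- upper bound for eLpNorm f
    have hhi : eLpNorm f p volume ≤ ENNReal.ofReal (2*a+3) := by
      have h1 := eLpNorm_mono (p := p) (μ := volume) hfbnd
      have h2 : eLpNorm ((Icc (α-1) (α+(2*a+1)+1)).indicator (fun _ => (1:ℝ))) p volume
          = (ENNReal.ofReal (2*a+3)) ^ (1 / p.toReal) := by
        rw [eLpNorm_indicator_const measurableSet_Icc hp0 hpt]
        rw [Real.volume_Icc]
        have : α + (2*a+1) + 1 - (α-1) = 2*a+3 := by ring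
        rw [this]
        simp
      have h3 : (ENNReal.ofReal (2*a+3)) ^ (1 / p.toReal) ≤ ENNReal.ofReal (2*a+3) := by
        have hz : 1 ≤ ENNReal.ofReal (2*a+3) := by
          rw [ENNReal.one_le_ofReal]; linarith
        calc (ENNReal.ofReal (2*a+3)) ^ (1 / p.toReal)
            ≤ (ENNReal.ofReal (2*a+3)) ^ (1:ℝ) := by
              apply ENNReal.rpow_le_rpow_of_exponent_le hz
              rw [div_le_one (by linarith : (0:ℝ) < p.toReal)]
              linarith
          _ = ENNReal.ofReal (2*a+3) := ENNReal.rpow_one _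
      exact le_trans h1 (le_trans h2.le h3)
    have hchain : ENNReal.ofReal (κ/ε) ≤ T := by
      calc ENNReal.ofReal (κ/ε) ≤ eLpNorm y p volume := hlo
        _ ≤ c * eLpNorm f p volume := hest
        _ ≤ c * ENNReal.ofReal (2*a+3) := mul_le_mul_right hhi c
    have hκε : κ/ε = T.toReal + 1 := by
      rw [hεdef]
      field_simp
    rw [hκε] at hchain
    have : ENNReal.ofReal (T.toReal + 1) = T + 1 := by
      rw [ENNReal.ofReal_add ENNReal.toReal_nonneg zero_le_one,
        ENNReal.ofReal_toReal hTtop, ENNReal.ofReal_one]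
    rw [this] at hchain
    exact absurd hchain (not_le.2 (ENNReal.lt_add_right hTtop one_ne_zero))
  · -- C case
    intro hpt hCS
    obtain ⟨c, hc0, hmain⟩ := hCS
    set ε : ℝ := κ / (c + 1) with hεdef
    have hεpos : 0 < ε := div_pos hκpos (by linarith)
    obtain ⟨α, hα⟩ := hfind ε hεpos
    obtain ⟨f, y, hfcont, hf01, hfbnd, hfmem, hsol, hynn, hymem, hlow⟩ :=
      key_construction r q hr hrpos hq hqnn a ha hB ε (2*a+1) α hεpos le_rfl hα
    have hbdd : ∃ M : ℝ, ∀ x, |f x| ≤ M :=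
      ⟨1, fun x => by rw [abs_of_nonneg (hf01 x).1]; exact (hf01 x).2⟩
    have hest := (hmain f hfcont hbdd).2 y hsol α
    have hsup : (⨆ t, |f t|) ≤ 1 :=
      Real.iSup_le (fun t => by rw [abs_of_nonneg (hf01 t).1]; exact (hf01 t).2) zero_le_one
    have h1 : |y α| = y α := abs_of_nonneg (hynn α)
    have h2 : κ/ε ≤ y α := hlow α ⟨le_rfl, by linarith⟩
    have h3 : κ/ε = c + 1 := by rw [hεdef]; field_simp
    have h4 : c * (⨆ t, |f t|) ≤ c * 1 := mul_le_mul_of_nonneg_left hsup hc0.le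
    rw [h1] at hest
    rw [h3] at h2
    linarith
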